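/- Let d ≥ 1, τ < T, and let f₁, f₂ : [τ,T] × ℝ^d → ℝ^d be jointly continuous. Suppose that for j = 1, 2 there are exponents p_i^j ≥ 2 (i = 1,…,d) and constants α^j, C₁^j, C₂^j > 0 such that for all t ∈ [τ,T] and all u ∈ ℝ₊^d: ∑_{i=1}^d |f_j^i(t,u)|^{p_i^j/(p_i^j−1)} ≤ C₁^j (1 + ∑_{i=1}^d |u^i|^{p_i^j}) and (f_j(t,u), u) ≥ α^j ∑_{i=1}^d |u^i|^{p_i^j} − C₂^j. If moreover f₁^i(t,u) ≥ f₂^i(t,u) for all t ∈ [τ,T], all u ∈ ℝ₊^d and all i, then p_i^1 ≥ p_i^2 for every i = 1,…,d. -/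

import Mathlib

set_option maxHeartbeats 1600000 in
/-- If `f₁, f₂ : [τ,T] × ℝ^d → ℝ^d` are jointly continuous, each satisfying
the growth and dissipativity conditions on the positive cone `ℝ₊^d` with exponents
`p₁ i, p₂ i ≥ 2` and positive constants, and `f₁^i(t,u) ≥ f₂^i(t,u)` on `ℝ₊^d`,
then `p₁ i ≥ p₂ i` for all `i`. -/
theorem exponents_ge_of_comparison_positive
    (d : ℕ) (hd : 1 ≤ d) (τ T : ℝ) (hτT : τ < T)
    (f₁ f₂ : ℝ → EuclideanSpace ℝ (Fin d) → EuclideanSpace ℝ (Fin d))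
    (hf₁cont : ContinuousOn (Function.uncurry f₁) (Set.Icc τ T ×ˢ Set.univ))
    (hf₂cont : ContinuousOn (Function.uncurry f₂) (Set.Icc τ T ×ˢ Set.univ))
    (p₁ p₂ : Fin d → ℝ) (hp₁ : ∀ i, 2 ≤ p₁ i) (hp₂ : ∀ i, 2 ≤ p₂ i)
    (α₁ C₁₁ C₂₁ α₂ C₁₂ C₂₂ : ℝ)
    (hα₁ : 0 < α₁) (hC₁₁ : 0 < C₁₁) (hC₂₁ : 0 < C₂₁)
    (hα₂ : 0 < α₂) (hC₁₂ : 0 < C₁₂) (hC₂₂ : 0 < C₂₂)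
    (hgrowth₁ : ∀ t ∈ Set.Icc τ T, ∀ u : EuclideanSpace ℝ (Fin d), (∀ i, 0 ≤ u i) →
      ∑ i, |f₁ t u i| ^ (p₁ i / (p₁ i - 1)) ≤ C₁₁ * (1 + ∑ i, |u i| ^ (p₁ i)))
    (hgrowth₂ : ∀ t ∈ Set.Icc τ T, ∀ u : EuclideanSpace ℝ (Fin d), (∀ i, 0 ≤ u i) →
      ∑ i, |f₂ t u i| ^ (p₂ i / (p₂ i - 1)) ≤ C₁₂ * (1 + ∑ i, |u i| ^ (p₂ i)))
    (hdiss₁ : ∀ t ∈ Set.Icc τ T, ∀ u : EuclideanSpace ℝ (Fin d), (∀ i, 0 ≤ u i) →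
      α₁ * (∑ i, |u i| ^ (p₁ i)) - C₂₁ ≤ ∑ i, f₁ t u i * u i)
    (hdiss₂ : ∀ t ∈ Set.Icc τ T, ∀ u : EuclideanSpace ℝ (Fin d), (∀ i, 0 ≤ u i) →
      α₂ * (∑ i, |u i| ^ (p₂ i)) - C₂₂ ≤ ∑ i, f₂ t u i * u i)
    (hcomp : ∀ t ∈ Set.Icc τ T, ∀ u : EuclideanSpace ℝ (Fin d), (∀ i, 0 ≤ u i) →
      ∀ i, f₂ t u i ≤ f₁ t u i) :
    ∀ i, p₂ i ≤ p₁ i := by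
  intro i
  by_contra hlt
  push_neg at hlt
  have hP2 : 2 ≤ p₁ i := hp₁ i
  have hQ2 : 2 ≤ p₂ i := hp₂ i
  set P := p₁ i with hPdef
  set Q := p₂ i with hQdef
  have hP0 : (0:ℝ) < P := by linarith
  have hP1 : (0:ℝ) < P - 1 := by linarith
  have hε : (0:ℝ) < Q - P := by linarith
  set K : ℝ := 2*C₁₁ + 1 with hKdef
  have hK0 : (0:ℝ) < K := by linarith
  set M : ℝ := (C₂₂ + K)/α₂ + 1 with hMdef
  have hM1 : (1:ℝ) ≤ M := by
    have h : 0 ≤ (C₂₂ + K)/α₂ := div_nonneg (by linarith) hα₂.le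
    rw [hMdef]; linarith
  set R : ℝ := M ^ ((Q-P)⁻¹) with hRdef
  have hR1 : (1:ℝ) ≤ R := by
    have := Real.rpow_le_rpow_of_exponent_le hM1 (by positivity : (0:ℝ) ≤ (Q-P)⁻¹)
    simpa [Real.rpow_zero] using
      (Real.rpow_le_rpow_of_exponent_le hM1
        (by positivity : (0:ℝ) ≤ (Q-P)⁻¹)).trans_eq' (Real.rpow_zero M)
  have hR0 : (0:ℝ) < R := by linarith
  set u : EuclideanSpace ℝ (Fin d) := EuclideanSpace.single i R with hudef
  have huval : ∀ j, u j = if j = i then R else 0 := by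
    intro j; simp [hudef, EuclideanSpace.single_apply]
  have hu : ∀ j, 0 ≤ u j := by
    intro j; rw [huval]; split <;> linarith
  have hτmem : τ ∈ Set.Icc τ T := ⟨le_refl _, hτT.le⟩
  -- sum of powers collapses
  have hsum : ∀ (p : Fin d → ℝ), (∀ j, 2 ≤ p j) →
      ∑ j, |u j| ^ (p j) = R ^ (p i) := by
    intro p hp
    rw [Finset.sum_eq_single i]
    · rw [huval, if_pos rfl, abs_of_nonneg hR0.le]
    · intro j _ hj
      rw [huval, if_neg hj, abs_zero, Real.zero_rpow (by have := hp j; linarith)]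
    · intro h; exact absurd (Finset.mem_univ i) h
  -- inner product collapses
  have hprod : ∀ g : Fin d → ℝ, ∑ j, g j * u j = g i * R := by
    intro g
    rw [Finset.sum_eq_single i]
    · rw [huval, if_pos rfl]
    · intro j _ hj; rw [huval, if_neg hj, mul_zero]
    · intro h; exact absurd (Finset.mem_univ i) h
  have hRP1 : (1:ℝ) ≤ R ^ P := by
    have := Real.rpow_le_rpow_of_exponent_le hR1 hP0.le
    simpa [Real.rpow_zero] using this.trans_eq' (Real.rpow_zero R)
  -- dissipativity for f₂
  have hd2 := hdiss₂ τ hτmem u hu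
  rw [hsum p₂ hp₂, hprod] at hd2
  -- comparison
  have hc := hcomp τ hτmem u hu i
  -- growth bound for f₁ at component i
  have hg1 := hgrowth₁ τ hτmem u hu
  rw [hsum p₁ hp₁] at hg1
  have hterm : |f₁ τ u i| ^ (P / (P-1)) ≤ C₁₁ * (1 + R ^ P) := by
    refine le_trans ?_ hg1
    exact Finset.single_le_sum (f := fun j => |f₁ τ u j| ^ (p₁ j / (p₁ j - 1)))
      (fun j _ => Real.rpow_nonneg (abs_nonneg _) _) (Finset.mem_univ i)
  have hq0 : P / (P-1) ≠ 0 := by positivity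
  have hA : |f₁ τ u i| ≤ (C₁₁ * (1 + R ^ P)) ^ (P / (P-1))⁻¹ := by
    have := Real.rpow_le_rpow (Real.rpow_nonneg (abs_nonneg _) _) hterm
      (by positivity : (0:ℝ) ≤ (P / (P-1))⁻¹)
    rwa [Real.rpow_rpow_inv (abs_nonneg _) hq0] at this
  have hbase : C₁₁ * (1 + R ^ P) ≤ (2*C₁₁) * R ^ P := by nlinarith
  have hθ : (P / (P-1))⁻¹ = (P-1)/P := by
    rw [inv_div]
  have hθ0 : (0:ℝ) ≤ (P-1)/P := by positivity
  have hθ1 : (P-1)/P ≤ 1 := by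
    rw [div_le_one hP0]; linarith
  have hA2 : |f₁ τ u i| ≤ K * R ^ (P-1) := by
    have h1 : (C₁₁ * (1 + R ^ P)) ^ ((P-1)/P) ≤ ((2*C₁₁) * R ^ P) ^ ((P-1)/P) :=
      Real.rpow_le_rpow (by positivity) hbase hθ0
    have h2 : ((2*C₁₁) * R ^ P) ^ ((P-1)/P)
        = (2*C₁₁) ^ ((P-1)/P) * R ^ (P-1) := by
      rw [Real.mul_rpow (by positivity) (Real.rpow_nonneg hR0.le _),
        ← Real.rpow_mul hR0.le]
      congr 1
      field_simp
    have h3 : (2*C₁₁) ^ ((P-1)/P) ≤ K := by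
      rcases le_or_gt 1 (2*C₁₁) with h | h
      · have := Real.rpow_le_rpow_of_exponent_le h hθ1
        rw [Real.rpow_one] at this
        linarith
      · have := Real.rpow_le_one (by positivity) h.le hθ0
        linarith
    calc |f₁ τ u i| ≤ (C₁₁ * (1 + R ^ P)) ^ ((P-1)/P) := by rwa [hθ] at hA
      _ ≤ (2*C₁₁) ^ ((P-1)/P) * R ^ (P-1) := h1.trans_eq h2
      _ ≤ K * R ^ (P-1) :=
          mul_le_mul_of_nonneg_right h3 (Real.rpow_nonneg hR0.le _)
  -- chain inequalities
  have hchain : α₂ * R ^ Q - C₂₂ ≤ K * R ^ P := by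
    have h1 : f₂ τ u i * R ≤ f₁ τ u i * R := mul_le_mul_of_nonneg_right hc hR0.le
    have h2 : f₁ τ u i * R ≤ K * R ^ (P-1) * R :=
      mul_le_mul_of_nonneg_right ((le_abs_self _).trans hA2) hR0.le
    have h3 : K * R ^ (P-1) * R = K * R ^ P := by
      rw [mul_assoc, ← Real.rpow_add_one hR0.ne' (P-1)]
      ring_nf
    linarith
  have hRQ : R ^ Q = R ^ P * M := by
    have h1 : R ^ Q = R ^ P * R ^ (Q - P) := by
      rw [← Real.rpow_add hR0]; ring_nf
    have h2 : R ^ (Q - P) = M := by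
      rw [hRdef, ← Real.rpow_mul (by linarith : (0:ℝ) ≤ M),
        inv_mul_cancel₀ hε.ne', Real.rpow_one]
    rw [h1, h2]
  rw [hRQ] at hchain
  have hαM : α₂ * M = C₂₂ + K + α₂ := by
    rw [hMdef]; field_simp
  have hkey : (C₂₂ + K + α₂) * R ^ P - C₂₂ ≤ K * R ^ P := by
    calc (C₂₂ + K + α₂) * R ^ P - C₂₂ = α₂ * (R ^ P * M) - C₂₂ := by
          rw [← hαM]; ring
      _ ≤ K * R ^ P := hchain
  have hmul : C₂₂ + α₂ ≤ (C₂₂ + α₂) * R ^ P :=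
    le_mul_of_one_le_right (by linarith) hRP1
  nlinarith [hkey, hmul]
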